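/- arXiv:2501.00285 — 8 statements merged into one kernel-verified Lean document; each statement's English description precedes it below -/
import Mathlib

section
/- For every positive integer n, the injective partial Catalan monoid IC_n is J-trivial, and its subsemigroup Q'_n = {α ∈ IC_n : 1 ∉ dom α} is J-trivial; that is, in each of these semigroups, any two elements generating the same two-sided principal ideal are equal. -/
open scoped Classical

namespace ICCatalan

/-- Partial injective transformations on `Fin n` (representing the chain `[n] = {1,…,n}`). -/
abbrev PT (n : ℕ) := Fin n ≃. Fin n

/-- Composition (left-to-right, `x(αβ) = (xα)β`) makes `PT n` a monoid. -/
noncomputable instance instMonoidPT (n : ℕ) : Monoid (PT n) where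
  mul f g := f.trans g
  one := PEquiv.refl (Fin n)
  mul_assoc := PEquiv.trans_assoc
  one_mul := PEquiv.refl_trans
  mul_one := PEquiv.trans_refl

lemma mul_def {n : ℕ} (f g : PT n) : f * g = f.trans g := rfl

/-- The domain of a partial transformation. -/
def pdom {n : ℕ} (f : PT n) : Set (Fin n) := {x | ∃ y, f x = some y}

/-- The image of a partial transformation. -/
def pim {n : ℕ} (f : PT n) : Set (Fin n) := {y | ∃ x, f x = some y}

/-- The height `|im f|` of a partial transformation. -/
noncomputable def height {n : ℕ} (f : PT n) : ℕ := (pim f).ncard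

/-- `f` is order-decreasing: `xf ≤ x` on the domain. -/
def IsDecr {n : ℕ} (f : PT n) : Prop := ∀ x y : Fin n, f x = some y → y ≤ x

/-- `f` is isotone: `x ≤ y` implies `xf ≤ yf` on the domain. -/
def IsIso {n : ℕ} (f : PT n) : Prop :=
  ∀ x₁ x₂ y₁ y₂ : Fin n, f x₁ = some y₁ → f x₂ = some y₂ → x₁ ≤ x₂ → y₁ ≤ y₂

/-- The injective partial Catalan monoid `IC_n`: all isotone order-decreasing
partial injective transformations of `[n]`. -/
def IC (n : ℕ) : Set (PT n) := {f | IsIso f ∧ IsDecr f}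

/-- `Q'_n = {α ∈ IC_n : 1 ∉ dom α}` (the least element of `Fin n` plays the role of `1 ∈ [n]`). -/
def Qp (n : ℕ) : Set (PT n) := {f | f ∈ IC n ∧ ∀ x : Fin n, (x : ℕ) = 0 → f x = none}

/-- `S¹ : S` with an identity adjoined (realized inside `PT n`). -/
def SOne {n : ℕ} (S : Set (PT n)) : Set (PT n) := S ∪ {1}

/-- The starred Green relation `L*` of the subsemigroup `S`. -/
def LStar {n : ℕ} (S : Set (PT n)) (a b : PT n) : Prop :=
  ∀ x ∈ SOne S, ∀ y ∈ SOne S, (a * x = a * y ↔ b * x = b * y)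

/-- The starred Green relation `R*` of the subsemigroup `S`. -/
def RStar {n : ℕ} (S : Set (PT n)) (a b : PT n) : Prop :=
  ∀ x ∈ SOne S, ∀ y ∈ SOne S, (x * a = y * a ↔ x * b = y * b)

/-- The starred Green relation `H* = L* ∩ R*`. -/
def HStar {n : ℕ} (S : Set (PT n)) (a b : PT n) : Prop :=
  LStar S a b ∧ RStar S a b

/-- The partial identity on a subset `A` of `[n]`. -/
noncomputable def pid {n : ℕ} (A : Set (Fin n)) : PT n := PEquiv.ofSet A

/-- An essential element: exactly one point `y` of the domain is moved, and `yf = y - 1`. -/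
def IsEssential {n : ℕ} (f : PT n) : Prop :=
  ∃ y z : Fin n, f y = some z ∧ (z : ℕ) + 1 = (y : ℕ) ∧
    ∀ x w : Fin n, f x = some w → w ≠ x → x = y

/-- The shift of `f`: the number of non-fixed points of its domain. -/
noncomputable def shift {n : ℕ} (f : PT n) : ℕ := {x : Fin n | ∃ w, f x = some w ∧ w ≠ x}.ncard


/-- `a` lies below `b` in the `J`-preorder of the semigroup `S`:
`a ∈ {b} ∪ Sb ∪ bS ∪ SbS`. -/
def JBelow {n : ℕ} (S : Set (PT n)) (a b : PT n) : Prop :=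
  a = b ∨ (∃ x ∈ S, a = x * b) ∨ (∃ x ∈ S, a = b * x) ∨ (∃ x ∈ S, ∃ y ∈ S, a = x * b * y)

section Aux

variable {n : ℕ}

/-- Weight of an option value: `0` for `none`, `y+1` for `some y`. -/
def wt : Option (Fin n) → ℕ
  | none => 0
  | some y => (y : ℕ) + 1

/-- The weight of a partial transformation. -/
noncomputable def Phi (f : PT n) : ℕ := ∑ x : Fin n, wt (f x)

/-- The domain of a partial transformation, as a finset. -/
noncomputable def domF (f : PT n) : Finset (Fin n) :=
  Finset.univ.filter fun x => (f x).isSome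

lemma mem_domF {f : PT n} {x : Fin n} : x ∈ domF f ↔ (f x).isSome := by
  simp [domF]

lemma phi_eq (f : PT n) : Phi f = ∑ x ∈ domF f, wt (f x) := by
  rw [Phi]
  refine (Finset.sum_subset (Finset.subset_univ _) ?_).symm
  intro x _ hx
  rw [mem_domF] at hx
  cases h : f x with
  | none => rfl
  | some y => simp [h] at hx

lemma decomp {U b V a : PT n} (ha : a = U * b * V) {x z : Fin n} (hx : a x = some z) :
    ∃ u v, U x = some u ∧ b u = some v ∧ V v = some z := by
  subst ha
  rw [mul_def, mul_def, PEquiv.trans_eq_some] at hx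
  obtain ⟨v, huv, hvz⟩ := hx
  rw [PEquiv.trans_eq_some] at huv
  obtain ⟨u, hu, hv⟩ := huv
  exact ⟨u, v, hu, hv, hvz⟩

/-- Total function extending a partial transformation by the identity. -/
noncomputable def uF (U : PT n) (x : Fin n) : Fin n := (U x).getD x

lemma uF_eq {U : PT n} {x u : Fin n} (h : U x = some u) : uF U x = u := by
  simp [uF, h]

lemma isSome_eq_some {o : Option (Fin n)} (h : o.isSome) : ∃ y, o = some y := by
  cases o with
  | none => simp at h
  | some y => exact ⟨y, rfl⟩

/-- One-sided analysis of a decomposition `a = U * b * V` with `U, V` decreasing. -/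
lemma side {U V a b : PT n} (hU : IsDecr U) (hV : IsDecr V) (ha : a = U * b * V) :
    Phi a ≤ Phi b ∧ (Phi b ≤ Phi a →
      ((domF a).image (uF U) = domF b ∧
       (∀ x ∈ domF a, a x = b (uF U x)) ∧
       (∀ x ∈ domF a, uF U x ≤ x))) := by
  -- structure of points in the domain of a
  have key : ∀ x ∈ domF a, ∃ u v z, a x = some z ∧ U x = some u ∧ b u = some v ∧
      V v = some z ∧ z ≤ v ∧ u ≤ x := by
    intro x hx
    rw [mem_domF] at hx
    obtain ⟨z, hz⟩ := isSome_eq_some hx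
    obtain ⟨u, v, hu, hv, hvz⟩ := decomp ha hz
    exact ⟨u, v, z, hz, hu, hv, hvz, hV _ _ hvz, hU _ _ hu⟩
  have hle : ∀ x ∈ domF a, uF U x ≤ x := by
    intro x hx
    obtain ⟨u, v, z, _, hu, _, _, _, hux⟩ := key x hx
    rw [uF_eq hu]; exact hux
  have hmapmem : ∀ x ∈ domF a, uF U x ∈ domF b := by
    intro x hx
    obtain ⟨u, v, z, _, hu, hv, _, _, _⟩ := key x hx
    rw [mem_domF, uF_eq hu, hv]; rfl
  have hinj : ∀ x ∈ domF a, ∀ y ∈ domF a, uF U x = uF U y → x = y := by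
    intro x hx y hy hxy
    obtain ⟨u, _, _, _, hu, _, _, _, _⟩ := key x hx
    obtain ⟨u', _, _, _, hu', _, _, _, _⟩ := key y hy
    rw [uF_eq hu, uF_eq hu'] at hxy
    subst hxy
    exact PEquiv.inj U hu hu'
  have hpt : ∀ x ∈ domF a, wt (a x) ≤ wt (b (uF U x)) := by
    intro x hx
    obtain ⟨u, v, z, hz, hu, hv, _, hzv, _⟩ := key x hx
    rw [hz, uF_eq hu, hv]
    simpa [wt] using hzv
  have h1 : ∑ x ∈ domF a, wt (a x) ≤ ∑ x ∈ domF a, wt (b (uF U x)) :=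
    Finset.sum_le_sum hpt
  have h2 : ∑ x ∈ domF a, wt (b (uF U x)) = ∑ y ∈ (domF a).image (uF U), wt (b y) :=
    (Finset.sum_image (f := fun y => wt (b y)) hinj).symm
  have h3 : (domF a).image (uF U) ⊆ domF b := by
    intro y hy
    obtain ⟨x, hx, rfl⟩ := Finset.mem_image.mp hy
    exact hmapmem x hx
  have h4 : ∑ y ∈ (domF a).image (uF U), wt (b y) ≤ ∑ y ∈ domF b, wt (b y) :=
    Finset.sum_le_sum_of_subset h3
  have hPhile : Phi a ≤ Phi b := by
    rw [phi_eq a, phi_eq b]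
    calc ∑ x ∈ domF a, wt (a x) ≤ _ := h1
      _ = _ := h2
      _ ≤ _ := h4
  refine ⟨hPhile, fun hge => ?_⟩
  have hPeq : Phi a = Phi b := le_antisymm hPhile hge
  rw [phi_eq a, phi_eq b] at hPeq
  -- the image fills the whole domain of b
  have himg : (domF a).image (uF U) = domF b := by
    by_contra hne
    obtain ⟨y, hy, hy'⟩ : ∃ y ∈ domF b, y ∉ (domF a).image (uF U) := by
      by_contra hc
      push_neg at hc
      exact hne (Finset.Subset.antisymm h3 hc)
    have hpos : 0 < wt (b y) := by
      rw [mem_domF] at hy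
      obtain ⟨v, hv⟩ := isSome_eq_some hy
      rw [hv]; simp [wt]
    have : ∑ y ∈ (domF a).image (uF U), wt (b y) < ∑ y ∈ domF b, wt (b y) :=
      Finset.sum_lt_sum_of_subset h3 hy hy' hpos (fun _ _ _ => Nat.zero_le _)
    omega
  have heq1 : ∑ x ∈ domF a, wt (a x) = ∑ x ∈ domF a, wt (b (uF U x)) := by
    rw [h2, himg] at *
    omega
  have hval : ∀ x ∈ domF a, a x = b (uF U x) := by
    have := (Finset.sum_eq_sum_iff_of_le hpt).mp heq1
    intro x hx
    obtain ⟨u, v, z, hz, hu, hv, _, hzv, _⟩ := key x hx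
    have hw := this x hx
    rw [hz, uF_eq hu, hv] at hw ⊢
    simp only [wt] at hw
    have : z = v := Fin.ext (by omega)
    rw [this]
  exact ⟨himg, hval, hle⟩

/-- The key cancellation lemma: mutual divisibility by decreasing maps gives equality. -/
lemma key_eq {U V U' V' a b : PT n} (hU : IsDecr U) (hV : IsDecr V)
    (hU' : IsDecr U') (hV' : IsDecr V')
    (ha : a = U * b * V) (hb : b = U' * a * V') : a = b := by
  obtain ⟨hab, hrest⟩ := side hU hV ha
  obtain ⟨hba, hrest'⟩ := side hU' hV' hb
  obtain ⟨him, hval, hle⟩ := hrest hba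
  obtain ⟨him', hval', hle'⟩ := hrest' hab
  set u := uF U with hu
  set u' := uF U' with hu'
  set σ : Fin n → Fin n := fun x => u' (u x) with hσ
  have himσ : (domF a).image σ = domF a := by
    rw [hσ]
    calc (domF a).image (fun x => u' (u x)) = ((domF a).image u).image u' := by
          rw [Finset.image_image]; rfl
      _ = (domF b).image u' := by rw [him]
      _ = domF a := him'
  have hinjσ : Set.InjOn σ (domF a) :=
    Finset.injOn_of_card_image_eq (by rw [himσ])
  have hleσ : ∀ x ∈ domF a, (σ x : ℕ) ≤ (x : ℕ) := by
    intro x hx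
    have h1 : u x ≤ x := hle x hx
    have h2 : u x ∈ domF b := by rw [← him]; exact Finset.mem_image_of_mem _ hx
    have h3 : u' (u x) ≤ u x := hle' _ h2
    exact le_trans h3 h1
  have hsum : ∑ x ∈ domF a, ((σ x : ℕ)) = ∑ x ∈ domF a, ((x : ℕ)) := by
    rw [← Finset.sum_image (f := fun y : Fin n => (y : ℕ))
      (fun x hx y hy hxy => hinjσ hx hy hxy), himσ]
  have hfix : ∀ x ∈ domF a, σ x = x := by
    have := (Finset.sum_eq_sum_iff_of_le hleσ).mp hsum
    intro x hx
    exact Fin.ext (this x hx)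
  have hux : ∀ x ∈ domF a, u x = x := by
    intro x hx
    have h1 : u x ≤ x := hle x hx
    have h2 : u x ∈ domF b := by rw [← him]; exact Finset.mem_image_of_mem _ hx
    have h3 : u' (u x) ≤ u x := hle' _ h2
    have h4 : u' (u x) = x := hfix x hx
    exact le_antisymm h1 (le_of_eq_of_le h4.symm h3)
  have hdomeq : domF b = domF a := by
    rw [← him]
    rw [Finset.image_congr (fun x hx => hux x hx)]
    exact Finset.image_id
  apply PEquiv.ext
  intro x
  by_cases hx : x ∈ domF a
  · rw [hval x hx, hux x hx]
  · have hx' : x ∉ domF b := by rw [hdomeq]; exact hx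
    rw [mem_domF] at hx hx'
    rw [Option.not_isSome_iff_eq_none] at hx hx'
    rw [hx, hx']

lemma one_isDecr : IsDecr (1 : PT n) := by
  intro x y h
  have : (PEquiv.refl (Fin n)) x = some y := h
  rw [PEquiv.refl_apply] at this
  cases this
  exact le_refl x

lemma jbelow_decomp {S : Set (PT n)} (hS : ∀ f ∈ S, IsDecr f) {a b : PT n}
    (h : JBelow S a b) : ∃ U V : PT n, IsDecr U ∧ IsDecr V ∧ a = U * b * V := by
  rcases h with rfl | ⟨x, hx, rfl⟩ | ⟨x, hx, rfl⟩ | ⟨x, hx, y, hy, rfl⟩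
  · exact ⟨1, 1, one_isDecr, one_isDecr, by rw [one_mul, mul_one]⟩
  · exact ⟨x, 1, hS x hx, one_isDecr, (mul_one _).symm⟩
  · exact ⟨1, x, one_isDecr, hS x hx, by rw [one_mul]⟩
  · exact ⟨x, y, hS x hx, hS y hy, rfl⟩

lemma jtrivial {S : Set (PT n)} (hS : ∀ f ∈ S, IsDecr f) {a b : PT n}
    (hab : JBelow S a b) (hba : JBelow S b a) : a = b := by
  obtain ⟨U, V, hU, hV, hUV⟩ := jbelow_decomp hS hab
  obtain ⟨U', V', hU', hV', hUV'⟩ := jbelow_decomp hS hba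
  exact key_eq hU hV hU' hV' hUV hUV'

end Aux

/-- for every positive integer `n`, both `IC_n` and `Q'_n` are `J`-trivial. -/
theorem stmt0 (n : ℕ) (hn : 0 < n) :
    (∀ a ∈ IC n, ∀ b ∈ IC n,
        JBelow (IC n) a b → JBelow (IC n) b a → a = b) ∧
    (∀ a ∈ Qp n, ∀ b ∈ Qp n,
        JBelow (Qp n) a b → JBelow (Qp n) b a → a = b) := by
  constructor
  · intro a _ b _ h1 h2
    exact jtrivial (fun f hf => hf.2) h1 h2
  · intro a _ b _ h1 h2
    exact jtrivial (fun f hf => hf.1.2) h1 h2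

end ICCatalan
end

section
/- Let S be either IC_n or Q'_n. An element α ∈ S is regular in S (i.e., there exists β ∈ S with αβα = α) if and only if α is an idempotent (α² = α). Consequently, for n ≥ 2 neither IC_n nor Q'_n is a regular semigroup. -/
open scoped Classical

namespace ICCatalan

lemma trans_apply' {n : ℕ} (f g : PT n) (x : Fin n) :
    (f * g) x = (f x).bind g := rfl

lemma key_reg_idem {n : ℕ} {α β : PT n} (hα : IsDecr α) (hβ : IsDecr β)
    (h : α * β * α = α) : α * α = α := by
  apply PEquiv.ext
  intro x
  rw [trans_apply']
  cases hx : α x with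
  | none => simp
  | some y =>
    have hh : ((α x).bind β).bind α = α x := by
      have := congrArg (fun f : PT n => f x) h
      simpa [trans_apply'] using this
    rw [hx] at hh
    simp only [Option.bind_some] at hh
    obtain ⟨z, hz, hzy⟩ := Option.bind_eq_some_iff.mp hh
    have hzy' : z = y := le_antisymm (hβ y z hz) (hα z y hzy)
    subst hzy'
    simp [hzy]

lemma decr_of_mem_IC {n : ℕ} {α : PT n} (h : α ∈ IC n) : IsDecr α := h.2

lemma decr_of_mem {n : ℕ} {S : Set (PT n)} (hS : S = IC n ∨ S = Qp n)
    {α : PT n} (h : α ∈ S) : IsDecr α := by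
  rcases hS with rfl | rfl
  · exact h.2
  · exact h.1.2

/-- in `S ∈ {IC_n, Q'_n}`, an element is regular iff it is idempotent;
consequently, for `n ≥ 2`, neither `IC_n` nor `Q'_n` is a regular semigroup. -/
theorem stmt1 (n : ℕ) (hn : 0 < n) :
    (∀ S ∈ ({IC n, Qp n} : Set (Set (PT n))), ∀ α ∈ S,
        ((∃ β ∈ S, α * β * α = α) ↔ α * α = α)) ∧
    (2 ≤ n →
      ¬ (∀ α ∈ IC n, ∃ β ∈ IC n, α * β * α = α) ∧
      ¬ (∀ α ∈ Qp n, ∃ β ∈ Qp n, α * β * α = α)) := by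
  have main : ∀ S ∈ ({IC n, Qp n} : Set (Set (PT n))), ∀ α ∈ S,
      ((∃ β ∈ S, α * β * α = α) ↔ α * α = α) := by
    rintro S hS α hα
    have hS' : S = IC n ∨ S = Qp n := by
      simpa [Set.mem_insert_iff] using hS
    constructor
    · rintro ⟨β, hβ, h⟩
      exact key_reg_idem (decr_of_mem hS' hα) (decr_of_mem hS' hβ) h
    · intro h
      exact ⟨α, hα, by rw [mul_assoc, h, h]⟩
  refine ⟨main, fun hn2 => ?_⟩
  -- the witness α : 1 ↦ 0
  set a0 : Fin n := ⟨0, hn⟩ with ha0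
  set a1 : Fin n := ⟨1, hn2⟩ with ha1
  set α : PT n := PEquiv.single a1 a0 with hαdef
  have hne : a0 ≠ a1 := by
    intro h
    have := congrArg (fun x : Fin n => (x : ℕ)) h
    simp [ha0, ha1] at this
  have happly : ∀ x : Fin n, α x = if x = a1 then some a0 else none := by
    intro x
    by_cases hx : x = a1
    · subst hx; simp [hαdef, PEquiv.single]
    · simp [hαdef, PEquiv.single, hx]
  have hQp : α ∈ Qp n := by
    refine ⟨⟨?_, ?_⟩, ?_⟩
    · intro x₁ x₂ y₁ y₂ h₁ h₂ _
      rw [happly] at h₁ h₂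
      split_ifs at h₁ h₂ <;> simp_all
    · intro x y h
      rw [happly] at h
      split_ifs at h with hx
      · subst hx
        simp only [Option.some_inj] at h
        subst h
        exact Fin.mk_le_mk.mpr (by omega)
    · intro x hx
      rw [happly]
      have : x ≠ a1 := by
        intro h; subst h; simp [ha1] at hx
      simp [this]
  have hIC : α ∈ IC n := hQp.1
  have hnidem : α * α ≠ α := by
    intro h
    have := congrArg (fun f : PT n => f a1) h
    simp only [trans_apply'] at this
    rw [happly a1, if_pos rfl] at this
    simp only [Option.bind_some, happly a0, if_neg hne] at this
    exact Option.some_ne_none a0 this.symm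
  constructor
  · intro hreg
    have := (main (IC n) (by simp) α hIC).mp (hreg α hIC)
    exact hnidem this
  · intro hreg
    have := (main (Qp n) (by simp) α hQp).mp (hreg α hQp)
    exact hnidem this

end ICCatalan
end

section
/- For every positive integer n, the semigroup Q'_n is right abundant (every R*-class of Q'_n contains an idempotent), but for n ≥ 2 it is not left abundant (some L*-class of Q'_n contains no idempotent). -/
open scoped Classical

namespace ICCatalan

lemma pid_apply {n : ℕ} (A : Set (Fin n)) (x : Fin n) :
    pid A x = if x ∈ A then some x else none := rfl

lemma pid_none {n : ℕ} {A : Set (Fin n)} {x : Fin n} (hx : x ∉ A) : pid A x = none := by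
  simp [pid_apply, hx]

lemma pid_some {n : ℕ} {A : Set (Fin n)} {x : Fin n} (hx : x ∈ A) : pid A x = some x := by
  simp [pid_apply, hx]

lemma pid_eq_some_iff {n : ℕ} {A : Set (Fin n)} {x y : Fin n} :
    pid A x = some y ↔ x = y ∧ x ∈ A := by
  rw [pid_apply]; split_ifs with h <;> simp [h]

lemma bind_key {n : ℕ} (a : PT n) (u v : Option (Fin n)) :
    u.bind a = v.bind a ↔ u.bind (pid (pdom a)) = v.bind (pid (pdom a)) := by
  have hnone : ∀ p : Fin n, a p = none ↔ pid (pdom a) p = none := by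
    intro p
    cases hap : a p with
    | none =>
        have : p ∉ pdom a := fun ⟨y, hy⟩ => by rw [hap] at hy; exact nomatch hy
        simp [pid_none this]
    | some y =>
        have hp : p ∈ pdom a := ⟨y, hap⟩
        simp [pid_some hp, hap]
  match u, v with
  | none, none => simp
  | some p, none =>
      exact hnone p
  | none, some q =>
      exact ⟨fun h => ((hnone q).mp h.symm).symm, fun h => ((hnone q).mpr h.symm).symm⟩
  | some p, some q =>
      show a p = a q ↔ pid (pdom a) p = pid (pdom a) q
      constructor
      · intro h
        cases hp : a p with
        | none =>
            rw [hp] at h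
            rw [(hnone p).mp hp, (hnone q).mp h.symm]
        | some z =>
            rw [hp] at h
            have : p = q := a.inj hp (h.symm)
            rw [this]
      · intro h
        by_cases hp : p ∈ pdom a
        · by_cases hq : q ∈ pdom a
          · rw [pid_some hp, pid_some hq] at h
            rw [Option.some_inj.mp h]
          · rw [pid_some hp, pid_none hq] at h; exact nomatch h
        · by_cases hq : q ∈ pdom a
          · rw [pid_none hp, pid_some hq] at h; exact nomatch h
          · have h1 : a p = none := by
              by_contra hne
              obtain ⟨y, hy⟩ := Option.ne_none_iff_exists'.mp hne
              exact hp ⟨y, hy⟩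
            have h2 : a q = none := by
              by_contra hne
              obtain ⟨y, hy⟩ := Option.ne_none_iff_exists'.mp hne
              exact hq ⟨y, hy⟩
            rw [h1, h2]

/-- `Q'_n` is right abundant for every positive `n`, but for `n ≥ 2`
it is not left abundant. -/
theorem stmt3 (n : ℕ) (hn : 0 < n) :
    (∀ a ∈ Qp n, ∃ e ∈ Qp n, e * e = e ∧ RStar (Qp n) a e) ∧
    (2 ≤ n → ∃ a ∈ Qp n, ∀ e ∈ Qp n, e * e = e → ¬ LStar (Qp n) a e) := by
  constructor
  · -- right abundant
    intro a ha
    refine ⟨pid (pdom a), ?_, ?_, ?_⟩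
    · refine ⟨⟨?_, ?_⟩, ?_⟩
      · intro x₁ x₂ y₁ y₂ h1 h2 hle
        obtain ⟨e1, _⟩ := pid_eq_some_iff.mp h1
        obtain ⟨e2, _⟩ := pid_eq_some_iff.mp h2
        rwa [← e1, ← e2]
      · intro x y h
        obtain ⟨e1, _⟩ := pid_eq_some_iff.mp h
        rw [← e1]
      · intro x hx
        refine pid_none (fun ⟨y, hy⟩ => ?_)
        rw [ha.2 x hx] at hy; exact nomatch hy
    · apply PEquiv.ext
      intro x
      show ((pid (pdom a)) x).bind (pid (pdom a)) = pid (pdom a) x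
      by_cases hx : x ∈ pdom a
      · rw [pid_some hx]; simp [pid_some hx]
      · rw [pid_none hx]; rfl
    · intro x _ y _
      constructor
      · intro h
        apply PEquiv.ext
        intro p
        show (x p).bind (pid (pdom a)) = (y p).bind (pid (pdom a))
        exact (bind_key a (x p) (y p)).mp (DFunLike.congr_fun h p)
      · intro h
        apply PEquiv.ext
        intro p
        show (x p).bind a = (y p).bind a
        exact (bind_key a (x p) (y p)).mpr (DFunLike.congr_fun h p)
  · -- not left abundant
    intro hn2
    have h0 : (0 : ℕ) < n := hn
    have h1 : (1 : ℕ) < n := hn2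
    set i1 : Fin n := ⟨1, h1⟩
    set i0 : Fin n := ⟨0, h0⟩
    set a : PT n := PEquiv.single i1 i0 with hadef
    have ha10 : a i1 = some i0 := PEquiv.single_apply i1 i0
    refine ⟨a, ⟨⟨?_, ?_⟩, ?_⟩, ?_⟩
    · intro x₁ x₂ y₁ y₂ hx1 hx2 _
      obtain ⟨_, e1⟩ := (PEquiv.mem_single_iff x₁ i1 y₁ i0).mp hx1
      obtain ⟨_, e2⟩ := (PEquiv.mem_single_iff x₂ i1 y₂ i0).mp hx2
      rw [e1, e2]
    · intro x y hx
      obtain ⟨ex, ey⟩ := (PEquiv.mem_single_iff x i1 y i0).mp hx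
      rw [ex, ey]
      exact Fin.mk_le_mk.mpr (Nat.zero_le 1)
    · intro x hx
      apply PEquiv.single_apply_of_ne
      intro hcon
      rw [← hcon] at hx
      simp [i1] at hx
    · intro e he hee hL
      have hmem1 : (1 : PT n) ∈ SOne (Qp n) := Or.inr rfl
      have hmeme : e ∈ SOne (Qp n) := Or.inl he
      have h := (hL (1 : PT n) hmem1 e hmeme).mpr
      have heq : a * 1 = a * e := h (by rw [mul_one, hee])
      rw [mul_one] at heq
      have : a i1 = (a * e) i1 := by rw [← heq]
      rw [ha10] at this
      have he0 : e i0 = none := he.2 i0 rfl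
      have : some i0 = none := by
        rw [this]
        show (a i1).bind e = none
        rw [ha10]
        exact he0
      exact nomatch this

end ICCatalan
end

section
/- For α, β ∈ IC_n: (i) α L* β (in IC_n) if and only if im α = im β; (ii) α R* β if and only if dom α = dom β; (iii) α H* β if and only if α = β. -/
open scoped Classical

namespace ICCatalan

/-! ### Auxiliary lemmas -/

section Aux

variable {n : ℕ}

lemma mul_apply (f g : PT n) (x : Fin n) : (f * g) x = (f x).bind g := rfl

lemma pid_eq_some {A : Set (Fin n)} {x y : Fin n} :
    pid A x = some y ↔ y = x ∧ x ∈ A := by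
  rw [show (pid A x = some y) ↔ (y = x ∧ y ∈ A) from PEquiv.ofSet_eq_some_iff]
  constructor
  · rintro ⟨rfl, h⟩; exact ⟨rfl, h⟩
  · rintro ⟨rfl, h⟩; exact ⟨rfl, h⟩

lemma pid_eq_none {A : Set (Fin n)} {x : Fin n} : pid A x = none ↔ x ∉ A := by
  constructor
  · intro h hx
    have := pid_eq_some.2 ⟨rfl, hx⟩
    rw [h] at this; exact Option.some_ne_none _ this.symm
  · intro hx
    cases h : pid A x with
    | none => rfl
    | some y =>
        obtain ⟨rfl, hy⟩ := pid_eq_some.1 h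
        exact absurd hy hx

lemma pequiv_eq_iff (f g : PT n) : f = g ↔ ∀ x, f x = g x :=
  ⟨fun h x => h ▸ rfl, PEquiv.ext⟩

lemma apply_eq_none_iff (f : PT n) (x : Fin n) : f x = none ↔ x ∉ pdom f := by
  cases h : f x <;> simp [pdom, h]

lemma pid_mem_IC (A : Set (Fin n)) : pid A ∈ IC n := by
  constructor
  · intro x₁ x₂ y₁ y₂ h1 h2 hle
    rw [pid_eq_some] at h1 h2
    rw [h1.1, h2.1]; exact hle
  · intro x y h; rw [pid_eq_some] at h; exact h.1.le

lemma pid_mem_SOne (A : Set (Fin n)) : pid A ∈ SOne (IC n) := Or.inl (pid_mem_IC A)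

lemma one_mem_SOne : (1 : PT n) ∈ SOne (IC n) := Or.inr rfl

lemma mul_pid_pim (f : PT n) : f * pid (pim f) = f := by
  apply PEquiv.ext; intro x
  rw [mul_apply]
  cases h : f x with
  | none => rfl
  | some y =>
      simp only [Option.bind_some]
      exact pid_eq_some.2 ⟨rfl, ⟨x, h⟩⟩

lemma pid_pdom_mul (f : PT n) : pid (pdom f) * f = f := by
  apply PEquiv.ext; intro x
  rw [mul_apply]
  by_cases hx : x ∈ pdom f
  · rw [pid_eq_some.2 ⟨rfl, hx⟩, Option.bind_some]
  · rw [pid_eq_none.2 hx, Option.bind_none, (apply_eq_none_iff f x).2 hx]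

lemma mul_left_eq_iff (f g h : PT n) :
    f * g = f * h ↔ ∀ v ∈ pim f, g v = h v := by
  constructor
  · rintro H v ⟨x, hx⟩
    have := congrArg (fun k : PT n => k x) H
    simpa [mul_apply, hx] using this
  · intro H
    apply PEquiv.ext; intro x
    rw [mul_apply, mul_apply]
    cases hx : f x with
    | none => rfl
    | some v =>
        simp only [Option.bind_some]
        exact H v ⟨x, hx⟩

lemma bind_right_iff (f : PT n) (a b : Option (Fin n)) :
    a.bind f = b.bind f ↔ a.bind (pid (pdom f)) = b.bind (pid (pdom f)) := by
  have hnone : ∀ u : Fin n, (f u = none ↔ pid (pdom f) u = none) := by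
    intro u
    rw [apply_eq_none_iff, pid_eq_none]
  cases a with
  | none =>
    cases b with
    | none => simp
    | some v =>
        simp only [Option.bind_none, Option.bind_some]
        rw [eq_comm, eq_comm (a := (none : Option (Fin n)))]
        exact hnone v
  | some u =>
    cases b with
    | none =>
        simp only [Option.bind_none, Option.bind_some]
        exact hnone u
    | some v =>
        simp only [Option.bind_some]
        by_cases huv : u = v
        · subst huv; simp
        · constructor
          · intro h
            cases hu : f u with
            | none =>
                rw [hu] at h
                rw [(hnone u).1 hu, eq_comm, (hnone v).1 (by rw [← h])]
            | some w =>
                exfalso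
                rw [hu] at h
                exact huv (PEquiv.inj f hu h.symm)
          · intro h
            cases hu : pid (pdom f) u with
            | none =>
                rw [hu] at h
                rw [(hnone u).2 hu, eq_comm, (hnone v).2 (by rw [← h])]
            | some w =>
                exfalso
                rw [hu] at h
                exact huv (PEquiv.inj (pid (pdom f)) hu h.symm)

lemma mul_right_eq_iff (f g h : PT n) :
    g * f = h * f ↔ g * pid (pdom f) = h * pid (pdom f) := by
  rw [pequiv_eq_iff, pequiv_eq_iff]
  refine forall_congr' fun x => ?_
  rw [mul_apply, mul_apply, mul_apply, mul_apply]
  exact bind_right_iff f (g x) (h x)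

lemma eq_of_dom_im {f g : PT n} (hf : IsIso f) (hg : IsIso g)
    (hd : pdom f = pdom g) (hi : pim f = pim g) : f = g := by
  have key : ∀ m : ℕ, ∀ x : Fin n, (x : ℕ) = m → ∀ y z, f x = some y → g x = some z → y = z := by
    intro m
    induction m using Nat.strong_induction_on with
    | _ m ih =>
      intro x hx y z hy hz
      have hyz : y ≤ z := by
        -- z ∈ pim g = pim f
        have hz' : z ∈ pim f := hi ▸ ⟨x, hz⟩
        obtain ⟨x', hx'⟩ := hz'
        rcases le_total x x' with h | h
        · exact hf x x' y z hy hx' h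
        · rcases eq_or_lt_of_le h with h | h
          · rw [h, hy] at hx'
            exact (Option.some_inj.1 hx').le
          · -- x' < x, use IH
            exfalso
            have hx'd : x' ∈ pdom g := hd ▸ ⟨z, hx'⟩
            obtain ⟨w, hw⟩ := hx'd
            have : z = w := ih x' (hx ▸ h) x' rfl z w hx' hw
            have : g x' = some z := this ▸ hw
            have := PEquiv.inj g this hz
            exact absurd this (ne_of_lt h)
      have hzy : z ≤ y := by
        have hy' : y ∈ pim g := hi ▸ ⟨x, hy⟩
        obtain ⟨x', hx'⟩ := hy'
        rcases le_total x x' with h | h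
        · exact hg x x' z y hz hx' h
        · rcases eq_or_lt_of_le h with h | h
          · rw [h, hz] at hx'
            exact (Option.some_inj.1 hx').le
          · exfalso
            have hx'd : x' ∈ pdom f := hd.symm ▸ ⟨y, hx'⟩
            obtain ⟨w, hw⟩ := hx'd
            have : w = y := ih x' (hx ▸ h) x' rfl w y hw hx'
            have : f x' = some y := this ▸ hw
            have := PEquiv.inj f this hy
            exact absurd this (ne_of_lt h)
      exact le_antisymm hyz hzy
  apply PEquiv.ext; intro x
  cases hy : f x with
  | none =>
      cases hz : g x with
      | none => rfl
      | some z =>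
          exfalso
          exact (apply_eq_none_iff f x).1 hy (hd ▸ ⟨z, hz⟩)
  | some y =>
      cases hz : g x with
      | none =>
          exfalso
          exact (apply_eq_none_iff g x).1 hz (hd ▸ ⟨y, hy⟩)
      | some z =>
          rw [key (x : ℕ) x rfl y z hy hz]

end Aux

/-- for `α, β ∈ IC_n`: `α L* β ↔ im α = im β`; `α R* β ↔ dom α = dom β`;
`α H* β ↔ α = β`. -/
theorem stmt4 (n : ℕ) (hn : 0 < n) :
    ∀ α ∈ IC n, ∀ β ∈ IC n,
      (LStar (IC n) α β ↔ pim α = pim β) ∧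
      (RStar (IC n) α β ↔ pdom α = pdom β) ∧
      (HStar (IC n) α β ↔ α = β) := by
  intro α hα β hβ
  have hL : LStar (IC n) α β ↔ pim α = pim β := by
    constructor
    · intro H
      have h1 : β * pid (pim α) = β := by
        have : α * pid (pim α) = α * 1 := by rw [mul_one, mul_pid_pim]
        have := (H _ (pid_mem_SOne _) _ one_mem_SOne).1 this
        rwa [mul_one] at this
      have h2 : α * pid (pim β) = α := by
        have : β * pid (pim β) = β * 1 := by rw [mul_one, mul_pid_pim]
        have := (H _ (pid_mem_SOne _) _ one_mem_SOne).2 this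
        rwa [mul_one] at this
      apply Set.Subset.antisymm
      · rintro v ⟨x, hx⟩
        have : (α * pid (pim β)) x = some v := by rw [h2]; exact hx
        obtain ⟨y, hy1, hy2⟩ := (PEquiv.trans_eq_some _ _ _ _).1 this
        obtain ⟨rfl, hmem⟩ := pid_eq_some.1 hy2
        exact hmem
      · rintro v ⟨x, hx⟩
        have : (β * pid (pim α)) x = some v := by rw [h1]; exact hx
        obtain ⟨y, hy1, hy2⟩ := (PEquiv.trans_eq_some _ _ _ _).1 this
        obtain ⟨rfl, hmem⟩ := pid_eq_some.1 hy2
        exact hmem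
    · intro H x hx y hy
      rw [mul_left_eq_iff, mul_left_eq_iff, H]
  have hR : RStar (IC n) α β ↔ pdom α = pdom β := by
    constructor
    · intro H
      have h1 : pid (pdom α) * β = β := by
        have : pid (pdom α) * α = 1 * α := by rw [one_mul, pid_pdom_mul]
        have := (H _ (pid_mem_SOne _) _ one_mem_SOne).1 this
        rwa [one_mul] at this
      have h2 : pid (pdom β) * α = α := by
        have : pid (pdom β) * β = 1 * β := by rw [one_mul, pid_pdom_mul]
        have := (H _ (pid_mem_SOne _) _ one_mem_SOne).2 this
        rwa [one_mul] at this
      apply Set.Subset.antisymm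
      · rintro u ⟨v, hv⟩
        have : (pid (pdom β) * α) u = some v := by rw [h2]; exact hv
        obtain ⟨y, hy1, hy2⟩ := (PEquiv.trans_eq_some _ _ _ _).1 this
        exact (pid_eq_some.1 hy1).2
      · rintro u ⟨v, hv⟩
        have : (pid (pdom α) * β) u = some v := by rw [h1]; exact hv
        obtain ⟨y, hy1, hy2⟩ := (PEquiv.trans_eq_some _ _ _ _).1 this
        exact (pid_eq_some.1 hy1).2
    · intro H x hx y hy
      rw [mul_right_eq_iff α x y, mul_right_eq_iff β x y, H]
  refine ⟨hL, hR, ?_⟩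
  constructor
  · rintro ⟨hl, hr⟩
    exact eq_of_dom_im hα.1 hβ.1 (hR.1 hr) (hL.1 hl)
  · rintro rfl
    exact ⟨fun x _ y _ => Iff.rfl, fun x _ y _ => Iff.rfl⟩

end ICCatalan
end

section
/- The semigroup Q'_n is right ample: for every α ∈ Q'_n and every idempotent ε ∈ Q'_n, one has αε = ε_{dom(αε)}·α, where ε_{dom(αε)} denotes the partial identity with domain dom(αε), which lies in Q'_n. -/
open scoped Classical

namespace ICCatalan

/-- `Q'_n` is right ample: for every `α ∈ Q'_n` and every idempotent
`ε ∈ Q'_n`, one has `αε = ε_{dom(αε)}·α`, and the partial identity `ε_{dom(αε)}`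
lies in `Q'_n`. -/
theorem stmt7 (n : ℕ) (hn : 0 < n) :
    ∀ α ∈ Qp n, ∀ ε ∈ Qp n, ε * ε = ε →
      α * ε = pid (pdom (α * ε)) * α ∧ pid (pdom (α * ε)) ∈ Qp n := by

  intro α hα ε hε hεε
  -- ε is a partial identity
  have htrans : ∀ (f g : PT n) (x : Fin n), (f * g) x = (f x).bind g := fun f g x => rfl
  have hfix : ∀ x y : Fin n, ε x = some y → y = x := by
    intro x y hxy
    have h1 : (ε * ε) x = ε x := by rw [hεε]
    rw [htrans, hxy] at h1
    have h2 : ε y = some y := h1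
    have i1 : ε.symm y = some x := (PEquiv.eq_some_iff ε).2 hxy
    have i2 : ε.symm y = some y := (PEquiv.eq_some_iff ε).2 h2
    exact (Option.some.inj (i1.symm.trans i2)).symm
  set A := pdom (α * ε) with hA
  have hpid : ∀ x : Fin n, (pid A) x = if x ∈ A then some x else none := by
    intro x
    by_cases hx : x ∈ A
    · simp [pid, PEquiv.ofSet_eq_some_self_iff, hx]
    · simp only [pid, hx, if_false]
      rw [Option.eq_none_iff_forall_not_mem]
      intro a ha
      rw [Option.mem_def, PEquiv.ofSet_eq_some_iff] at ha
      exact hx (ha.1 ▸ ha.2)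
  constructor
  · apply PEquiv.ext
    intro x
    rw [htrans, htrans, hpid]
    rcases hax : α x with _ | y
    · have hxA : x ∉ A := by
        rintro ⟨y, hy⟩
        rw [htrans, hax] at hy
        simp at hy
      simp [hxA]
    · rcases hey : ε y with _ | z
      · have hxA : x ∉ A := by
          rintro ⟨w, hw⟩
          rw [htrans, hax] at hw
          simp only [Option.bind_some] at hw
          rw [hey] at hw
          simp at hw
        simp [hxA, hey]
      · have hzy : z = y := hfix y z hey
        subst hzy
        have hxA : x ∈ A := by
          refine ⟨z, ?_⟩
          rw [htrans, hax]
          simpa using hey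
        simp [hxA, hey, hax]
  · refine ⟨⟨?_, ?_⟩, ?_⟩
    · intro x₁ x₂ y₁ y₂ h1 h2 hle
      rw [hpid] at h1 h2
      split_ifs at h1 h2
      · rw [← Option.some.inj h1, ← Option.some.inj h2]; exact hle
    · intro x y h
      rw [hpid] at h
      split_ifs at h
      · rw [← Option.some.inj h]
    · intro x hx
      have hxA : x ∉ A := by
        rintro ⟨y, hy⟩
        rw [htrans, hα.2 x hx] at hy
        simp at hy
      rw [hpid]
      simp [hxA]


end ICCatalan
end

section
/- Every element α ∈ IC_n of shift 1 (i.e., with exactly one point y ∈ dom α such that yα ≠ y) is a finite product of essential elements of IC_n, each of the same height |im α| as α. -/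
open scoped Classical

namespace ICCatalan

/-! ### Auxiliary constructions -/

/-- `α` with the value at `y` (where `α y = some z`) retargeted to `w ∉ im α`. -/
noncomputable def retarget {n : ℕ} (α : PT n) (y z w : Fin n)
    (hαy : α y = some z) (hw : ∀ x, α x ≠ some w) : PT n where
  toFun x := if x = y then some w else α x
  invFun u := if u = w then some y else if u = z then none else α.symm u
  inv a b := by
    split_ifs with h1 h2 h3 h4 h5 <;>
      simp_all [Option.mem_def, PEquiv.eq_some_iff] <;>
      first
        | exact fun e => h2 e.symm
        | exact fun e => h1 e.symm
        | exact fun h => h4 (PEquiv.inj α h hαy)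
        | exact iff_of_false (fun e => h3 e.symm) (fun e => h1 e.symm)

lemma retarget_self {n : ℕ} (α : PT n) (y z w : Fin n) (h1) (h2) :
    retarget α y z w h1 h2 y = some w := by
  simp [retarget, PEquiv.coe_mk_apply]

lemma retarget_other {n : ℕ} (α : PT n) (y z w : Fin n) (h1) (h2) {x : Fin n} (hx : x ≠ y) :
    retarget α y z w h1 h2 x = α x := by
  simp [retarget, PEquiv.coe_mk_apply, hx]

/-- The "essential" companion: fixes `dom α \ {y}`, and sends `w ↦ z`
(where `α y = some z`, `w ∉ dom α ∪ im α`). -/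
noncomputable def essMap {n : ℕ} (α : PT n) (y z w : Fin n)
    (hαy : α y = some z) (hwd : α w = none) (hwy : w ≠ y) : PT n where
  toFun x := if x = w then some z else if x = y then none else α x
  invFun u := if u = z then some w else α.symm u
  inv a b := by
    split_ifs with h1 h2 h3 h4 h5 <;>
      simp_all [Option.mem_def, PEquiv.eq_some_iff] <;>
      first
        | exact fun e => h1 e.symm
        | exact iff_of_false (fun e => h2 e.symm)
            (fun h => h3 (PEquiv.inj α h hαy))

lemma essMap_self {n : ℕ} (α : PT n) (y z w : Fin n) (h1) (h2) (h3) :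
    essMap α y z w h1 h2 h3 w = some z := by
  simp [essMap, PEquiv.coe_mk_apply]

lemma essMap_y {n : ℕ} (α : PT n) (y z w : Fin n) (h1) (h2) (h3) :
    essMap α y z w h1 h2 h3 y = none := by
  simp [essMap, PEquiv.coe_mk_apply, h3.symm, (Ne.symm h3 : y ≠ w)]

lemma essMap_other {n : ℕ} (α : PT n) (y z w : Fin n) (h1) (h2) (h3) {x : Fin n}
    (hx : x ≠ w) (hx' : x ≠ y) :
    essMap α y z w h1 h2 h3 x = α x := by
  simp [essMap, PEquiv.coe_mk_apply, hx, hx']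

/-- The key induction: if `α ∈ IC n` moves exactly the point `y`, with `α y = some z` and
`↑y = ↑z + k`, then `α` is a product of essential elements of height `height α`. -/
lemma key (n : ℕ) : ∀ k : ℕ, ∀ α : PT n, α ∈ IC n → ∀ y z : Fin n,
    {x : Fin n | ∃ v, α x = some v ∧ v ≠ x} = {y} → α y = some z → (y : ℕ) = (z : ℕ) + k →
    α ∈ Subsemigroup.closure {β : PT n | β ∈ IC n ∧ IsEssential β ∧ height β = height α} := by
  intro k
  induction k with
  | zero =>
    intro α hα y z hset hαy hk
    exfalso
    have hy : y ∈ {x : Fin n | ∃ v, α x = some v ∧ v ≠ x} := hset ▸ rfl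
    obtain ⟨v, hv, hvy⟩ := hy
    rw [hαy, Option.some.injEq] at hv
    have hv' := congrArg Fin.val hv
    exact hvy (Fin.ext (by omega))
  | succ m ih =>
    intro α hα y z hset hαy hk
    -- basic facts
    have hmoved : ∀ x v : Fin n, α x = some v → v ≠ x → x = y := by
      intro x v hx hvx
      have : x ∈ {x : Fin n | ∃ v, α x = some v ∧ v ≠ x} := ⟨v, hx, hvx⟩
      rw [hset] at this
      exact this
    have hfix : ∀ x v : Fin n, α x = some v → x ≠ y → v = x := by
      intro x v hx hxy
      by_contra hne
      exact hxy (hmoved x v hx hne)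
    have hgap : ∀ x : Fin n, x ≠ y → α x = some x → (x : ℕ) < z ∨ (y : ℕ) < x := by
      intro x hxy hx
      have hxz : x ≠ z := fun e => hxy (PEquiv.inj α (e ▸ hx) hαy)
      by_contra hcon
      push_neg at hcon
      obtain ⟨h1, h2⟩ := hcon
      have hxley : x ≤ y := Fin.le_def.mpr h2
      have := hα.1 x y x z hx hαy hxley
      rw [Fin.le_def] at this
      have : (x : ℕ) ≠ z := fun e => hxz (Fin.ext e)
      omega
    cases m with
    | zero =>
      -- α is itself essential
      apply Subsemigroup.subset_closure
      exact ⟨hα, ⟨y, z, hαy, by omega, hmoved⟩, rfl⟩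
    | succ m' =>
      have hwn : (z : ℕ) + 1 < n := lt_of_le_of_lt (by omega) y.isLt
      set w : Fin n := ⟨(z : ℕ) + 1, hwn⟩ with hwdef
      have hwval : (w : ℕ) = (z : ℕ) + 1 := rfl
      have hwy : w ≠ y := fun e => by
        have : (w : ℕ) = (y : ℕ) := by rw [e]
        omega
      have hwdom : α w = none := by
        cases h : α w with
        | none => rfl
        | some v =>
          exfalso
          have hvw : v = w := hfix w v h hwy
          rcases hgap w hwy (hvw ▸ h) with h1 | h1 <;> omega
      have hwim : ∀ x, α x ≠ some w := by
        intro x hx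
        by_cases hxy : x = y
        · subst hxy
          rw [hαy, Option.some.injEq] at hx
          have : (z : ℕ) = (w : ℕ) := by rw [hx]
          omega
        · have := hfix x w hx hxy
          subst this
          rw [hwdom] at hx
          exact nomatch hx
      set β : PT n := retarget α y z w hαy hwim with hβdef
      set γ : PT n := essMap α y z w hαy hwdom hwy with hγdef
      have hβy : β y = some w := retarget_self α y z w hαy hwim
      have hβo : ∀ {x : Fin n}, x ≠ y → β x = α x :=
        fun hx => retarget_other α y z w hαy hwim hx
      have hγw : γ w = some z := essMap_self α y z w hαy hwdom hwy
      have hγy : γ y = none := essMap_y α y z w hαy hwdom hwy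
      have hγo : ∀ {x : Fin n}, x ≠ w → x ≠ y → γ x = α x :=
        fun hx hx' => essMap_other α y z w hαy hwdom hwy hx hx'
      -- the decomposition α = β * γ
      have hdecomp : α = β * γ := by
        apply PEquiv.ext
        intro x
        have htr : (β * γ) x = (β x).bind γ := rfl
        rw [htr]
        by_cases hxy : x = y
        · subst hxy
          rw [hβy, Option.bind_some, hγw, hαy]
        · rw [hβo hxy]
          cases h : α x with
          | none => rfl
          | some v =>
            have hvx : v = x := hfix x v h hxy
            have hxw : x ≠ w := fun e => by rw [e, hwdom] at h; exact nomatch h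
            rw [Option.bind_some, hvx, hγo hxw hxy, h, hvx]
      -- β ∈ IC n
      have hβIC : β ∈ IC n := by
        constructor
        · intro x₁ x₂ y₁ y₂ h1 h2 hle
          by_cases e1 : x₁ = y <;> by_cases e2 : x₂ = y
          · rw [e1, hβy, Option.some.injEq] at h1
            rw [e2, hβy, Option.some.injEq] at h2
            rw [Fin.le_def]
            have h1' := congrArg Fin.val h1
            have h2' := congrArg Fin.val h2
            omega
          · rw [e1, hβy, Option.some.injEq] at h1
            rw [hβo e2] at h2
            rw [Fin.le_def] at hle ⊢
            have h1' := congrArg Fin.val h1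
            have h2' := congrArg Fin.val (hfix x₂ y₂ h2 e2)
            have he1 := congrArg Fin.val e1
            omega
          · rw [e2, hβy, Option.some.injEq] at h2
            rw [hβo e1] at h1
            have hvx : y₁ = x₁ := hfix x₁ y₁ h1 e1
            rw [Fin.le_def] at hle ⊢
            rcases hgap x₁ e1 (hvx ▸ h1) with hg | hg
            all_goals
              have h1' := congrArg Fin.val hvx
              have h2' := congrArg Fin.val h2
              have he2 := congrArg Fin.val e2
              omega
          · rw [hβo e1] at h1
            rw [hβo e2] at h2
            exact hα.1 x₁ x₂ y₁ y₂ h1 h2 hle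
        · intro x v h
          by_cases e : x = y
          · rw [e, hβy, Option.some.injEq] at h
            have h' := congrArg Fin.val h
            have he := congrArg Fin.val e
            rw [Fin.le_def]
            omega
          · rw [hβo e] at h
            exact hα.2 x v h
      -- moved set of β
      have hβset : {x : Fin n | ∃ v, β x = some v ∧ v ≠ x} = {y} := by
        ext x
        simp only [Set.mem_setOf_eq, Set.mem_singleton_iff]
        constructor
        · rintro ⟨v, hv, hvx⟩
          by_contra hxy
          rw [hβo hxy] at hv
          exact hvx (hfix x v hv hxy)
        · rintro rfl
          exact ⟨w, hβy, hwy⟩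
      -- height β = height α
      have hzim : z ∈ pim α := ⟨y, hαy⟩
      have hwim' : w ∉ pim α := fun ⟨x, hx⟩ => hwim x hx
      have hpimβ : pim β = insert w (pim α \ {z}) := by
        ext u
        simp only [pim, Set.mem_setOf_eq, Set.mem_insert_iff, Set.mem_diff,
          Set.mem_singleton_iff]
        constructor
        · rintro ⟨x, hx⟩
          by_cases e : x = y
          · subst e
            rw [hβy, Option.some.injEq] at hx
            exact Or.inl hx.symm
          · rw [hβo e] at hx
            refine Or.inr ⟨⟨x, hx⟩, fun huz => e (PEquiv.inj α (huz ▸ hx) hαy)⟩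
        · rintro (rfl | ⟨⟨x, hx⟩, huz⟩)
          · exact ⟨y, hβy⟩
          · have hxy : x ≠ y := fun e => huz (by rw [e, hαy, Option.some.injEq] at hx; exact hx.symm)
            exact ⟨x, (hβo hxy).trans hx⟩
      have hβheight : height β = height α := by
        unfold height
        rw [hpimβ,
          Set.ncard_insert_of_notMem (fun h => hwim' h.1) (Set.toFinite _),
          Set.ncard_diff_singleton_add_one hzim (Set.toFinite _)]
      -- γ ∈ IC n
      have hγIC : γ ∈ IC n := by
        constructor
        · intro x₁ x₂ y₁ y₂ h1 h2 hle
          by_cases e1 : x₁ = y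
          · rw [e1, hγy] at h1; exact nomatch h1
          by_cases e2 : x₂ = y
          · rw [e2, hγy] at h2; exact nomatch h2
          by_cases f1 : x₁ = w <;> by_cases f2 : x₂ = w
          · rw [f1, hγw, Option.some.injEq] at h1
            rw [f2, hγw, Option.some.injEq] at h2
            rw [Fin.le_def]
            have h1' := congrArg Fin.val h1
            have h2' := congrArg Fin.val h2
            omega
          · rw [f1, hγw, Option.some.injEq] at h1
            rw [hγo f2 e2] at h2
            have hvx : y₂ = x₂ := hfix x₂ y₂ h2 e2
            rw [Fin.le_def] at hle ⊢
            rcases hgap x₂ e2 (hvx ▸ h2) with hg | hg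
            all_goals
              have h1' := congrArg Fin.val h1
              have h2' := congrArg Fin.val hvx
              have hf1 := congrArg Fin.val f1
              omega
          · rw [f2, hγw, Option.some.injEq] at h2
            rw [hγo f1 e1] at h1
            have hvx : y₁ = x₁ := hfix x₁ y₁ h1 e1
            rw [Fin.le_def] at hle ⊢
            rcases hgap x₁ e1 (hvx ▸ h1) with hg | hg
            all_goals
              have h2' := congrArg Fin.val h2
              have h1' := congrArg Fin.val hvx
              have hf2 := congrArg Fin.val f2
              omega
          · rw [hγo f1 e1] at h1
            rw [hγo f2 e2] at h2
            exact hα.1 x₁ x₂ y₁ y₂ h1 h2 hle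
        · intro x v h
          by_cases e : x = y
          · rw [e, hγy] at h; exact nomatch h
          by_cases f : x = w
          · rw [f, hγw, Option.some.injEq] at h
            have h' := congrArg Fin.val h
            have hf := congrArg Fin.val f
            rw [Fin.le_def]
            omega
          · rw [hγo f e] at h
            exact hα.2 x v h
      -- γ essential
      have hγess : IsEssential γ := by
        refine ⟨w, z, hγw, by omega, ?_⟩
        intro x v hxv hvx
        by_contra hxw
        by_cases e : x = y
        · subst e; rw [hγy] at hxv; exact nomatch hxv
        · rw [hγo hxw e] at hxv
          exact hvx (hfix x v hxv e)
      -- height γ = height α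
      have hpimγ : pim γ = pim α := by
        ext u
        simp only [pim, Set.mem_setOf_eq]
        constructor
        · rintro ⟨x, hx⟩
          by_cases f : x = w
          · subst f
            rw [hγw, Option.some.injEq] at hx
            exact hx ▸ ⟨y, hαy⟩
          by_cases e : x = y
          · subst e; rw [hγy] at hx; exact nomatch hx
          · rw [hγo f e] at hx
            exact ⟨x, hx⟩
        · rintro ⟨x, hx⟩
          by_cases e : x = y
          · subst e
            rw [hαy, Option.some.injEq] at hx
            exact ⟨w, hx ▸ hγw⟩
          · have hxw : x ≠ w := fun f => by rw [f, hwdom] at hx; exact nomatch hx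
            exact ⟨x, (hγo hxw e).trans hx⟩
      have hγheight : height γ = height α := by unfold height; rw [hpimγ]
      -- conclude
      have hβgap : (y : ℕ) = (w : ℕ) + (m' + 1) := by
        rw [hwval]; omega
      have hmemβ := ih β hβIC y w hβset hβy hβgap
      rw [hβheight] at hmemβ
      have hmem : β * γ ∈ Subsemigroup.closure
          {δ : PT n | δ ∈ IC n ∧ IsEssential δ ∧ height δ = height α} :=
        Subsemigroup.mul_mem _ hmemβ (Subsemigroup.subset_closure ⟨hγIC, hγess, hγheight⟩)
      rwa [← hdecomp] at hmem

/-- every element `α ∈ IC_n` of shift `1` is a finite product of essential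
elements of `IC_n`, each of the same height `|im α|` as `α`. -/
theorem stmt11 (n : ℕ) (hn : 0 < n) :
    ∀ α ∈ IC n, shift α = 1 →
      α ∈ Subsemigroup.closure
        {β : PT n | β ∈ IC n ∧ IsEssential β ∧ height β = height α} := by
  intro α hα hshift
  unfold shift at hshift
  obtain ⟨y, hset⟩ := Set.ncard_eq_one.mp hshift
  have hy : y ∈ {x : Fin n | ∃ v, α x = some v ∧ v ≠ x} := hset ▸ rfl
  obtain ⟨z, hz, hzy⟩ := hy
  have hle : z ≤ y := hα.2 y z hz
  rw [Fin.le_def] at hle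
  have hne : (z : ℕ) ≠ (y : ℕ) := fun e => hzy (Fin.ext e)
  exact key n ((y : ℕ) - (z : ℕ)) α hα y z hset hz (by omega)

end ICCatalan
end

section
/- For n ≥ 2, the total number of essential elements in IC_n is (n−1)·2^{n−2}. -/
open scoped Classical

namespace ICCatalan

variable {n : ℕ}

def emb (i : Fin (n-1)) (j : Fin (n-2)) : Fin n :=
  if (j:ℕ) < (i:ℕ) then ⟨j, by have := j.isLt; omega⟩ else ⟨(j:ℕ)+2, by have := j.isLt; omega⟩

lemma emb_inj (i : Fin (n-1)) : Function.Injective (emb i) := by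
  intro a b h
  unfold emb at h
  split_ifs at h <;> (apply Fin.ext; have := congrArg Fin.val h; simp only [] at this; omega)

lemma emb_val (i : Fin (n-1)) (j : Fin (n-2)) :
    ((emb i j : Fin n) : ℕ) = if (j:ℕ) < (i:ℕ) then (j:ℕ) else (j:ℕ)+2 := by
  unfold emb; split_ifs <;> rfl

lemma emb_ne_i (i : Fin (n-1)) (j : Fin (n-2)) : ((emb i j : Fin n) : ℕ) ≠ (i:ℕ) := by
  rw [emb_val]; split_ifs <;> omega

lemma emb_ne_i1 (i : Fin (n-1)) (j : Fin (n-2)) : ((emb i j : Fin n) : ℕ) ≠ (i:ℕ)+1 := by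
  rw [emb_val]; split_ifs <;> omega

lemma emb_surj (i : Fin (n-1)) (x : Fin n) (h1 : (x:ℕ) ≠ (i:ℕ)) (h2 : (x:ℕ) ≠ (i:ℕ)+1) :
    ∃ j, emb i j = x := by
  rcases lt_or_gt_of_ne h1 with h | h
  · refine ⟨⟨x, by have := i.isLt; omega⟩, ?_⟩
    apply Fin.ext; rw [emb_val]; simp [h]
  · have hx : (i:ℕ) + 2 ≤ (x:ℕ) := by omega
    refine ⟨⟨(x:ℕ)-2, by have := x.isLt; omega⟩, ?_⟩
    apply Fin.ext; rw [emb_val]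
    have h2 : ¬ ((((⟨(x:ℕ)-2, by have := x.isLt; omega⟩ : Fin (n-2)) : Fin (n-2)):ℕ) < (i:ℕ)) := by
      simp only []; omega
    rw [if_neg h2]; simp only []; omega

/-- the moved point `y = i+1`. -/
def yp (i : Fin (n-1)) : Fin n := ⟨(i:ℕ)+1, by have := i.isLt; omega⟩
/-- its image `z = i`. -/
def zp (i : Fin (n-1)) : Fin n := ⟨(i:ℕ), by have := i.isLt; omega⟩

lemma zp_not_mem (i : Fin (n-1)) (S : Finset (Fin (n-2))) : zp i ∉ S.image (emb i) := by
  intro h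
  obtain ⟨j, -, hj⟩ := Finset.mem_image.mp h
  exact emb_ne_i i j (congrArg Fin.val hj)

lemma yp_not_mem (i : Fin (n-1)) (S : Finset (Fin (n-2))) : yp i ∉ S.image (emb i) := by
  intro h
  obtain ⟨j, -, hj⟩ := Finset.mem_image.mp h
  exact emb_ne_i1 i j (congrArg Fin.val hj)

lemma yp_ne_zp (i : Fin (n-1)) : yp i ≠ zp i := by
  intro h; have := congrArg Fin.val h; simp [yp, zp] at this

/-- the essential element with moved point `i+1 ↦ i` and fixed set `emb i '' S`. -/
noncomputable def g (p : Fin (n-1) × Finset (Fin (n-2))) : PT n where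
  toFun x := if x = yp p.1 then some (zp p.1) else
    if x ∈ p.2.image (emb p.1) then some x else none
  invFun x := if x = zp p.1 then some (yp p.1) else
    if x ∈ p.2.image (emb p.1) then some x else none
  inv a b := by
    by_cases hbz : b = zp p.1
    · subst hbz
      simp only [if_pos rfl]
      constructor
      · rintro h; have : a = yp p.1 := by simpa using h.symm
        subst this; simp
      · intro h
        by_cases hay : a = yp p.1
        · simpa using hay.symm
        · rw [if_neg hay] at h
          by_cases ham : a ∈ p.2.image (emb p.1)
          · rw [if_pos ham] at h
            have : a = zp p.1 := by simpa using h
            exact absurd (this ▸ ham) (zp_not_mem p.1 p.2)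
          · simp [ham] at h
    · rw [if_neg hbz]
      by_cases hbm : b ∈ p.2.image (emb p.1)
      · rw [if_pos hbm]
        constructor
        · intro h
          have hab : a = b := by simpa using h.symm
          subst hab
          have hay : a ≠ yp p.1 := fun h => (yp_not_mem p.1 p.2) (h ▸ hbm)
          rw [if_neg hay, if_pos hbm]
        · intro h
          by_cases hay : a = yp p.1
          · rw [if_pos hay] at h
            exact absurd (by simpa using h) (Ne.symm hbz)
          · rw [if_neg hay] at h
            by_cases ham : a ∈ p.2.image (emb p.1)
            · rw [if_pos ham] at h; simpa using h.symm
            · simp [ham] at h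
      · rw [if_neg hbm]
        simp only [false_iff, reduceCtorEq, false_iff]
        intro h
        by_cases hay : a = yp p.1
        · rw [if_pos hay] at h
          have : zp p.1 = b := by simpa using h
          exact hbz this.symm
        · rw [if_neg hay] at h
          by_cases ham : a ∈ p.2.image (emb p.1)
          · rw [if_pos ham] at h
            have hab : a = b := by simpa using h
            exact hbm (hab ▸ ham)
          · simp [ham] at h

lemma g_apply (p : Fin (n-1) × Finset (Fin (n-2))) (x : Fin n) :
    g p x = if x = yp p.1 then some (zp p.1) else
      if x ∈ p.2.image (emb p.1) then some x else none := rfl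


lemma mem_val_facts {i : Fin (n-1)} {S : Finset (Fin (n-2))} {x : Fin n}
    (h : x ∈ S.image (emb i)) : (x:ℕ) ≠ (i:ℕ) ∧ (x:ℕ) ≠ (i:ℕ)+1 := by
  obtain ⟨j, -, hj⟩ := Finset.mem_image.mp h
  exact ⟨hj ▸ emb_ne_i i j, hj ▸ emb_ne_i1 i j⟩

lemma mem_image_emb_iff {i : Fin (n-1)} {S : Finset (Fin (n-2))} {j : Fin (n-2)} :
    emb i j ∈ S.image (emb i) ↔ j ∈ S := by
  constructor
  · intro h
    obtain ⟨j', hj', he⟩ := Finset.mem_image.mp h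
    exact emb_inj i he ▸ hj'
  · exact fun h => Finset.mem_image_of_mem _ h

lemma g_mem_IC (p : Fin (n-1) × Finset (Fin (n-2))) : g p ∈ IC n := by
  constructor
  · intro x₁ x₂ y₁ y₂ h1 h2 hle
    rw [g_apply] at h1 h2
    rw [Fin.le_def] at hle ⊢
    split_ifs at h1 h2 with e1 e2 e2 e2 e2 <;>
      first
        | (injection h1 with h1'; injection h2 with h2'; subst h1'; subst h2'
           first
             | omega
             | (first
                 | (subst e1; have := mem_val_facts ‹x₂ ∈ p.2.image (emb p.1)›
                    simp only [yp, zp] at *; omega)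
                 | (subst e2; have := mem_val_facts ‹x₁ ∈ p.2.image (emb p.1)›
                    simp only [yp, zp] at *; omega)
                 | (have hx1 : (x₁:ℕ) = (yp p.1 : ℕ) := congrArg Fin.val e1
                    have hx2 : (x₂:ℕ) = (yp p.1 : ℕ) := congrArg Fin.val e2
                    simp only [yp, zp] at *; omega)))
        | exact absurd h1 (by simp)
        | exact absurd h2 (by simp)
  · intro x y h
    rw [g_apply] at h
    rw [Fin.le_def]
    split_ifs at h with e1 e2
    · injection h with h'; subst h'
      have := congrArg Fin.val e1
      simp only [yp, zp] at *; omega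
    · injection h with h'; omega

lemma g_essential (p : Fin (n-1) × Finset (Fin (n-2))) : IsEssential (g p) := by
  refine ⟨yp p.1, zp p.1, ?_, by simp [yp, zp], ?_⟩
  · rw [g_apply, if_pos rfl]
  · intro x w h hne
    rw [g_apply] at h
    split_ifs at h with e1 e2
    · exact e1
    · injection h with h'; exact absurd h'.symm hne

lemma g_injective : Function.Injective (g : Fin (n-1) × Finset (Fin (n-2)) → PT n) := by
  rintro ⟨i, S⟩ ⟨i', S'⟩ h
  have happ : ∀ x, g (i, S) x = g (i', S') x := fun x => by rw [h]
  have hii : i = i' := by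
    have := happ (yp i)
    rw [g_apply, if_pos rfl, g_apply] at this
    split_ifs at this with e1 e2
    · apply Fin.ext
      have h1 : (yp i : ℕ) = (yp i' : ℕ) := congrArg Fin.val e1
      simp only [yp] at h1; omega
    · have : zp i = yp i := by simpa using this
      have := congrArg Fin.val this; simp [yp, zp] at this
  subst hii
  have hSS : S = S' := by
    ext j
    have := happ (emb i j)
    have hne : emb i j ≠ yp i := fun e => emb_ne_i1 i j (congrArg Fin.val e)
    rw [g_apply, g_apply, if_neg hne, if_neg hne] at this
    simp only [mem_image_emb_iff] at this
    constructor
    · intro hj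
      rw [if_pos hj] at this
      by_contra hj'
      rw [if_neg hj'] at this
      exact absurd this (by simp)
    · intro hj
      rw [if_pos hj] at this
      by_contra hj'
      rw [if_neg hj'] at this
      exact absurd this.symm (by simp)
  simp [hSS]

lemma essential_mem_range (hn : 2 ≤ n) {α : PT n} (hIC : α ∈ IC n) (hE : IsEssential α) :
    ∃ p, g p = α := by
  obtain ⟨y, z, hyz, hval, huniq⟩ := hE
  have hi : (z:ℕ) < n - 1 := by have := y.isLt; omega
  set i : Fin (n-1) := ⟨(z:ℕ), hi⟩ with hidef
  have hyp : yp i = y := by apply Fin.ext; simp only [yp, hidef]; omega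
  have hzp : zp i = z := by apply Fin.ext; simp only [zp, hidef]
  set S : Finset (Fin (n-2)) :=
    Finset.univ.filter (fun j => α (emb i j) = some (emb i j)) with hSdef
  refine ⟨(i, S), ?_⟩
  apply PEquiv.ext
  intro x
  rw [g_apply]
  by_cases hx : x = y
  · subst hx
    rw [if_pos (by rw [hyp]), hzp, hyz]
  · rw [if_neg (by rw [hyp]; exact hx)]
    by_cases hm : x ∈ S.image (emb i)
    · rw [if_pos hm]
      obtain ⟨j, hj, hje⟩ := Finset.mem_image.mp hm
      rw [hSdef] at hj
      simp only [Finset.mem_filter, Finset.mem_univ, true_and] at hj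
      rw [← hje, hj]
    · rw [if_neg hm]
      cases hα : α x with
      | none => rfl
      | some w =>
        exfalso
        have hwx : w = x := by
          by_contra hc
          exact hx (huniq x w hα hc)
        have hα' : α x = some x := by rw [hα, hwx]
        have hxz : (x:ℕ) ≠ (i:ℕ) := by
          intro hc
          have hxez : x = z := Fin.ext (by rw [hc, hidef])
          have h1 : α z = some z := hxez ▸ hα'
          have h2 : z = y := PEquiv.inj α h1 hyz
          have := congrArg Fin.val h2
          omega
        have hxy : (x:ℕ) ≠ (i:ℕ)+1 := by
          intro hc
          refine hx (Fin.ext ?_)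
          simp only [hidef] at hc
          omega
        obtain ⟨j, hj⟩ := emb_surj i x hxz hxy
        apply hm
        rw [← hj]
        refine Finset.mem_image_of_mem _ ?_
        rw [hSdef]
        simp only [Finset.mem_filter, Finset.mem_univ, true_and, hj, hα']


/-- for `n ≥ 2`, the total number of essential elements of `IC_n` is
`(n-1)·2^(n-2)`. -/
theorem stmt13 (n : ℕ) (hn : 2 ≤ n) :
    {α : PT n | α ∈ IC n ∧ IsEssential α}.ncard = (n - 1) * 2 ^ (n - 2) := by
  have hset : {α : PT n | α ∈ IC n ∧ IsEssential α} = Set.range g := by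
    ext α
    constructor
    · rintro ⟨h1, h2⟩
      exact essential_mem_range hn h1 h2
    · rintro ⟨p, rfl⟩
      exact ⟨g_mem_IC p, g_essential p⟩
  rw [hset, ← Nat.card_coe_set_eq, Nat.card_range_of_injective g_injective,
    Nat.card_eq_fintype_card, Fintype.card_prod, Fintype.card_fin, Fintype.card_finset,
    Fintype.card_fin]


end ICCatalan
end

section
/- Fix 1 ≤ p ≤ n and let G(p) ⊆ IC_n be the union of the set of idempotents of height p and the set of essential elements of height p. For all α, β ∈ IC_n with h(α) = h(β) = p: the product αβ belongs to G(p) if and only if α, β ∈ G(p) and (αβ = α or αβ = β). -/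
open scoped Classical

namespace ICCatalan

/-- `G(p)`: the idempotents of height `p` together with the essential elements of
height `p` in `IC_n`. -/
def Gset (n p : ℕ) : Set (PT n) :=
  {α | α ∈ IC n ∧ height α = p ∧ (α * α = α ∨ IsEssential α)}

section Helpers

variable {n : ℕ}

lemma pinj (f : PT n) {x₁ x₂ y : Fin n} (h1 : f x₁ = some y) (h2 : f x₂ = some y) :
    x₁ = x₂ :=
  PEquiv.inj f h1 h2

lemma ncard_pdom_eq (f : PT n) : (pdom f).ncard = height f := by
  have himg : pim f = (fun x => (f x).getD x) '' pdom f := by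
    ext v
    constructor
    · rintro ⟨x, hx⟩
      exact ⟨x, ⟨v, hx⟩, by simp [hx]⟩
    · rintro ⟨x, ⟨w, hw⟩, hx⟩
      exact ⟨x, by simp [hw] at hx ⊢; exact hx⟩
  have hinj : Set.InjOn (fun x => (f x).getD x) (pdom f) := by
    rintro a ⟨u, hu⟩ b ⟨v, hv⟩ hab
    simp only [hu, hv, Option.getD_some] at hab
    subst hab
    exact pinj f hu hv
  rw [height, himg, Set.ncard_image_of_injOn hinj]

lemma idem_of_fix {f : PT n} (h : ∀ x w, f x = some w → w = x) : f * f = f := by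
  apply PEquiv.ext
  intro x
  rw [mul_apply]
  cases hx : f x with
  | none => rfl
  | some w =>
    have hw := h x w hx
    subst hw
    simp [hx]

lemma fix_of_idem {f : PT n} (h : f * f = f) : ∀ x w, f x = some w → w = x := by
  intro x w hx
  have h2 : (f * f) x = some w := by rw [h]; exact hx
  rw [mul_apply, hx, Option.bind_some] at h2
  exact pinj f h2 hx

end Helpers

/-- for `α, β ∈ IC_n` of height `p` (with `1 ≤ p ≤ n`):
`αβ ∈ G(p)` iff `α, β ∈ G(p)` and (`αβ = α` or `αβ = β`). -/
theorem stmt14 (n p : ℕ) (hp1 : 1 ≤ p) (hpn : p ≤ n) :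
    ∀ α ∈ IC n, ∀ β ∈ IC n, height α = p → height β = p →
      (α * β ∈ Gset n p ↔
        (α ∈ Gset n p ∧ β ∈ Gset n p ∧ (α * β = α ∨ α * β = β))) := by
  intro α hα β hβ ha hb
  constructor
  · intro hG
    obtain ⟨hγIC, hγh, hor⟩ := hG
    have hαd := hα.2
    have hβd := hβ.2
    -- pdom (α*β) = pdom α
    have F1 : pdom (α * β) ⊆ pdom α := by
      rintro x ⟨v, hv⟩
      rw [mul_apply] at hv
      cases hx : α x with
      | none => rw [hx] at hv; simp at hv
      | some u => exact ⟨u, hx⟩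
    have F3 : pdom (α * β) = pdom α := by
      apply Set.eq_of_subset_of_ncard_le F1
      rw [ncard_pdom_eq, ncard_pdom_eq, ha, hγh]
    have F4 : ∀ x u, α x = some u → ∃ v, β u = some v ∧ (α * β) x = some v := by
      intro x u hxu
      have hx : x ∈ pdom (α * β) := F3.symm ▸ (⟨u, hxu⟩ : x ∈ pdom α)
      obtain ⟨v, hv⟩ := hx
      refine ⟨v, ?_, hv⟩
      have hv' := hv
      rw [mul_apply, hxu, Option.bind_some] at hv'
      exact hv'
    rcases hor with hid | hess
    · -- idempotent case
      have fixg := fix_of_idem hid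
      have fixα : ∀ x u, α x = some u → u = x := by
        intro x u hxu
        obtain ⟨v, hbv, hgv⟩ := F4 x u hxu
        have hvx := fixg x v hgv
        rw [hvx] at hbv
        exact le_antisymm (hαd x u hxu) (hβd u x hbv)
      have hαidem : α * α = α := idem_of_fix fixα
      have hpimα_sub : pim α ⊆ pdom β := by
        rintro u ⟨x, hx⟩
        obtain ⟨v, hbv, _⟩ := F4 x u hx
        exact ⟨v, hbv⟩
      have hpimα_eq : pim α = pdom β := by
        apply Set.eq_of_subset_of_ncard_le hpimα_sub
        rw [ncard_pdom_eq, hb, show (pim α).ncard = height α from rfl, ha]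
      have fixβ : ∀ u w, β u = some w → w = u := by
        intro u w huw
        have hu : u ∈ pim α := hpimα_eq.symm ▸ (⟨w, huw⟩ : u ∈ pdom β)
        obtain ⟨x, hx⟩ := hu
        have hux := fixα x u hx
        rw [hux] at huw ⊢
        rw [hux] at hx
        obtain ⟨v, hbv, hgv⟩ := F4 x x hx
        have hvx := fixg x v hgv
        rw [hvx] at hbv
        rw [huw] at hbv
        exact Option.some_inj.mp hbv
      have hβidem : β * β = β := idem_of_fix fixβ
      have hab : α * β = α := by
        apply PEquiv.ext
        intro x
        rw [mul_apply]
        cases hx : α x with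
        | none => rfl
        | some u =>
          obtain ⟨v, hbv, _⟩ := F4 x u hx
          have hvu := fixβ u v hbv
          subst hvu
          rw [Option.bind_some, hbv]
      exact ⟨⟨hα, ha, Or.inl hαidem⟩, ⟨hβ, hb, Or.inl hβidem⟩, Or.inl hab⟩
    · -- essential case
      obtain ⟨y, z, hyz, hz1, huniq⟩ := hess
      have fixother : ∀ x, x ≠ y → ∀ w, (α * β) x = some w → w = x := by
        intro x hxy w hw
        by_contra hwx
        exact hxy (huniq x w hw hwx)
      have key : ∀ x u, x ≠ y → α x = some u → u = x ∧ β x = some x := by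
        intro x u hxy hxu
        obtain ⟨v, hbv, hgv⟩ := F4 x u hxu
        have hvx := fixother x hxy v hgv
        rw [hvx] at hbv
        have hux : u = x := le_antisymm (hαd x u hxu) (hβd u x hbv)
        rw [hux] at hbv
        exact ⟨hux, hbv⟩
      obtain ⟨u₀, hyu⟩ : y ∈ pdom α := F3 ▸ (⟨z, hyz⟩ : y ∈ pdom (α * β))
      obtain ⟨v₀, hbv₀, hgv₀⟩ := F4 y u₀ hyu
      have hv₀z : v₀ = z := by rw [hyz] at hgv₀; exact (Option.some_inj.mp hgv₀).symm
      rw [hv₀z] at hbv₀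
      by_cases hu : u₀ = y
      · -- α is a partial identity, α*β = β essential
        rw [hu] at hyu hbv₀
        have fixα : ∀ x u, α x = some u → u = x := by
          intro x u hxu
          by_cases hxy : x = y
          · subst hxy
            rw [hyu] at hxu
            exact (Option.some_inj.mp hxu).symm
          · exact (key x u hxy hxu).1
        have hαidem : α * α = α := idem_of_fix fixα
        have hdomsub : pdom α ⊆ pdom β := by
          rintro x ⟨u, hxu⟩
          by_cases hxy : x = y
          · subst hxy; exact ⟨z, hbv₀⟩
          · exact ⟨x, (key x u hxy hxu).2⟩
        have hdomeq : pdom α = pdom β := by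
          apply Set.eq_of_subset_of_ncard_le hdomsub
          rw [ncard_pdom_eq, ncard_pdom_eq, ha, hb]
        have hgb : α * β = β := by
          apply PEquiv.ext
          intro x
          cases hx : α x with
          | none =>
            rw [mul_apply, hx, Option.bind_none]
            cases hb' : β x with
            | none => rfl
            | some w =>
              exfalso
              obtain ⟨u, hu⟩ : x ∈ pdom α := hdomeq.symm ▸ (⟨w, hb'⟩ : x ∈ pdom β)
              rw [hx] at hu
              cases hu
          | some u =>
            by_cases hxy : x = y
            · subst hxy
              rw [hyz, hbv₀]
            · have hkx := key x u hxy hx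
              have hgx : (α * β) x = some x := by
                obtain ⟨v, hbv, hgv⟩ := F4 x u hx
                rw [fixother x hxy v hgv] at hgv
                exact hgv
              rw [hgx, hkx.2]
        refine ⟨⟨hα, ha, Or.inl hαidem⟩, ?_, Or.inr hgb⟩
        rw [← hgb]
        exact ⟨hγIC, hγh, Or.inr ⟨y, z, hyz, hz1, huniq⟩⟩
      · -- α is essential, β is a partial identity, α*β = α
        have hu₀z : u₀ = z := by
          have h1 : (z : ℕ) ≤ (u₀ : ℕ) := hβd u₀ z hbv₀
          have h2 : (u₀ : ℕ) ≤ (y : ℕ) := hαd y u₀ hyu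
          have h3 : (u₀ : ℕ) ≠ (y : ℕ) := fun h => hu (Fin.ext h)
          exact Fin.ext (by omega)
        rw [hu₀z] at hyu hbv₀
        have hga : α * β = α := by
          apply PEquiv.ext
          intro x
          cases hx : α x with
          | none => rw [mul_apply, hx, Option.bind_none]
          | some u =>
            by_cases hxy : x = y
            · subst hxy
              rw [hyz]
              rw [hyu] at hx
              exact hx
            · obtain ⟨v, hbv, hgv⟩ := F4 x u hx
              rw [fixother x hxy v hgv] at hgv
              have hux := (key x u hxy hx).1
              rw [hgv, hux]
        have hαess : IsEssential α := by
          refine ⟨y, z, hyu, hz1, ?_⟩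
          intro x w hxw hwx
          by_contra hxy
          exact hwx (key x w hxy hxw).1
        have hzy : z ≠ y := by
          intro h
          rw [h] at hz1
          omega
        have hznA : z ∉ pdom α := by
          rintro ⟨w, hzw⟩
          have hwz := (key z w hzy hzw).1
          rw [hwz] at hzw
          exact hzy (pinj α hzw hyu)
        have hyA : y ∈ pdom α := ⟨z, hyu⟩
        have hS : insert z (pdom α \ {y}) ⊆ pdom β := by
          intro x hx
          rcases Set.mem_insert_iff.mp hx with h | hx'
          · rw [h]
            exact ⟨z, hbv₀⟩
          · obtain ⟨⟨u, hxu⟩, hxy⟩ := hx'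
            have hxy' : x ≠ y := fun h => hxy (by simp [h])
            exact ⟨x, (key x u hxy' hxu).2⟩
        have hcardS : (insert z (pdom α \ {y})).ncard = p := by
          rw [Set.ncard_insert_of_notMem (fun h => hznA h.1),
            Set.ncard_diff_singleton_of_mem hyA]
          have hA : (pdom α).ncard = p := by rw [ncard_pdom_eq, ha]
          omega
        have hSeq : insert z (pdom α \ {y}) = pdom β := by
          apply Set.eq_of_subset_of_ncard_le hS
          rw [ncard_pdom_eq, hb, hcardS]
        have fixβ : ∀ x w, β x = some w → w = x := by
          intro x w hxw
          have hx : x ∈ insert z (pdom α \ {y}) := hSeq.symm ▸ (⟨w, hxw⟩ : x ∈ pdom β)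
          rcases Set.mem_insert_iff.mp hx with h | hx'
          · rw [h] at hxw ⊢
            rw [hbv₀] at hxw
            exact (Option.some_inj.mp hxw).symm
          · obtain ⟨⟨u, hxu⟩, hxy⟩ := hx'
            have hxy' : x ≠ y := fun h => hxy (by simp [h])
            have hbx := (key x u hxy' hxu).2
            rw [hbx] at hxw
            exact (Option.some_inj.mp hxw).symm
        have hβidem : β * β = β := idem_of_fix fixβ
        exact ⟨⟨hα, ha, Or.inr hαess⟩, ⟨hβ, hb, Or.inl hβidem⟩, Or.inl hga⟩
  · rintro ⟨hαG, hβG, hor⟩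
    rcases hor with h | h <;> rw [h] <;> assumption

end ICCatalan
end
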